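/- arXiv:1509.06629 — 2 statements merged into one kernel-verified Lean document; each statement's English description precedes it below -/
import Mathlib

section
/- With notation as in the observer-based CP^1 construction, define for each d-subset I of {1,...,n} the element g_I = \odot_{i in I} L_i^k in Sym^d(P_{1,k}). Then p_I(g_{I'}) is nonzero if I = I' and equals 0 if I differs from I', for all d-subsets I, I' of {1,...,n}. -/
open Polynomial Finset

/-- The bilinear pairing on binary forms of degree `k`, where a form
`q(u,v) = ∑ c_i u^(k-i) v^i` is encoded as the polynomial `∑ c_i X^i` (i.e. `u = 1`,
`X = v`):  `(q, q~) = ∑_{i=0}^k (-1)^i c_i d_{k-i} / binom(k,i)`. -/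
noncomputable def bform (k : ℕ) (q r : Polynomial ℂ) : ℂ :=
  ∑ i ∈ Finset.range (k + 1), (-1) ^ i * q.coeff i * r.coeff (k - i) / (k.choose i : ℂ)



lemma linpow_eq (a b : ℂ) (k : ℕ) :
    (C a * X - C b) ^ k
      = ∑ m ∈ Finset.range (k+1), C (a ^ m * (-b) ^ (k - m) * (k.choose m : ℂ)) * X ^ m := by
  have : C a * X - C b = C a * X + C (-b) := by rw [map_neg]; ring
  rw [this, add_pow]
  refine Finset.sum_congr rfl fun m _ => ?_
  rw [mul_pow, ← C_pow, ← C_pow, ← map_natCast (C : ℂ →+* ℂ[X]), C_mul, C_mul]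
  ring

lemma coeff_linpow (a b : ℂ) (k i : ℕ) (h : i ≤ k) :
    ((C a * X - C b) ^ k).coeff i = (k.choose i : ℂ) * a ^ i * (-b) ^ (k - i) := by
  rw [linpow_eq, finset_sum_coeff]
  simp only [coeff_C_mul, coeff_X_pow, mul_ite, mul_one, mul_zero]
  rw [Finset.sum_ite_eq (Finset.range (k+1)) i]
  simp [Finset.mem_range.2 (Nat.lt_succ_of_le h)]
  ring

lemma natDeg_lin (a b : ℂ) : (C a * X - C b).natDegree ≤ 1 := by
  rw [sub_eq_add_neg, ← map_neg]; exact natDegree_linear_le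

lemma bform_linpow (k : ℕ) (q : ℂ[X]) (a b : ℂ) :
    bform k q ((C a * X - C b) ^ k) = ∑ i ∈ Finset.range (k+1), q.coeff i * a ^ (k - i) * b ^ i := by
  unfold bform
  refine Finset.sum_congr rfl fun i hi => ?_
  have hik : i ≤ k := Nat.lt_succ_iff.mp (Finset.mem_range.mp hi)
  rw [coeff_linpow a b k (k - i) (Nat.sub_le _ _)]
  have h1 : k - (k - i) = i := Nat.sub_sub_self hik
  have h2 : (k.choose (k - i) : ℂ) = (k.choose i : ℂ) := by rw [Nat.choose_symm hik]
  have hne : (k.choose i : ℂ) ≠ 0 := Nat.cast_ne_zero.2 (Nat.choose_pos hik).ne'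
  rw [h1, h2]
  field_simp
  rw [show (-b) ^ i = (-1)^i * b ^ i by rw [← mul_pow]; ring_nf]
  ring_nf
  rw [pow_mul, ← pow_mul, mul_comm i 2, pow_mul]
  norm_num


lemma homog {n : ℕ} (S : Finset (Fin n)) (u v : Fin n → ℂ) (a b : ℂ) :
    ∑ i ∈ Finset.range (S.card + 1),
        (∏ j ∈ S, (C (u j) * X - C (v j))).coeff i * a ^ (S.card - i) * b ^ i
      = ∏ j ∈ S, (u j * b - v j * a) := by
  set q : ℂ[X] := ∏ j ∈ S, (C (u j) * X - C (v j)) with hq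
  have hdeg : q.natDegree ≤ S.card := by
    have h1 : ∑ j ∈ S, (C (u j) * X - C (v j)).natDegree ≤ ∑ _j ∈ S, 1 :=
      Finset.sum_le_sum fun j _ => natDeg_lin (u j) (v j)
    have h2 := natDegree_prod_le S (fun j => C (u j) * X - C (v j))
    simpa using le_trans h2 h1
  by_cases ha : a = 0
  · subst ha
    rw [Finset.sum_eq_single S.card]
    · have hc : q.coeff S.card = ∏ j ∈ S, (u j) := by
        have := coeff_prod_of_natDegree_le S (fun j => C (u j) * X - C (v j)) 1
          (fun j _ => natDeg_lin _ _)
        simp only [mul_one] at this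
        rw [hq, this]
        refine Finset.prod_congr rfl fun j _ => ?_
        simp
      rw [hc]
      simp [Finset.prod_mul_distrib, mul_comm]
    · intro i hi hne
      have : 0 < S.card - i := Nat.sub_pos_of_lt (lt_of_le_of_ne (Nat.lt_succ_iff.mp
        (Finset.mem_range.mp hi)) hne)
      rw [zero_pow this.ne']
      ring
    · intro h; exact absurd (Finset.mem_range.2 (Nat.lt_succ_self _)) h
  · have heval : q.eval (b / a) = ∏ j ∈ S, (u j * (b / a) - v j) := by
      rw [hq, eval_prod]
      refine Finset.prod_congr rfl fun j _ => by simp only [eval_sub, eval_mul, eval_C, eval_X]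
    have hsum : q.eval (b / a) = ∑ i ∈ Finset.range (S.card + 1), q.coeff i * (b / a) ^ i :=
      eval_eq_sum_range' (Nat.lt_succ_of_le hdeg) _
    have key : a ^ S.card * q.eval (b / a)
        = ∑ i ∈ Finset.range (S.card + 1), q.coeff i * a ^ (S.card - i) * b ^ i := by
      rw [hsum, Finset.mul_sum]
      refine Finset.sum_congr rfl fun i hi => ?_
      have hik : i ≤ S.card := Nat.lt_succ_iff.mp (Finset.mem_range.mp hi)
      rw [div_pow, pow_sub₀ a ha hik]
      field_simp
    rw [← key, heval]
    have : ∀ j ∈ S, u j * b - v j * a = a * (u j * (b / a) - v j) := by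
      intro j _; field_simp
    rw [Finset.prod_congr rfl this, Finset.prod_mul_distrib, Finset.prod_const]

lemma cross_ne {n : ℕ} (u v : Fin n → ℂ) (hnz : ∀ i, ((u i, v i) : ℂ × ℂ) ≠ 0)
    (hdist : ∀ i j, i ≠ j → ¬ ∃ c : ℂ, ((u j, v j) : ℂ × ℂ) = c • (u i, v i))
    (i j : Fin n) (hij : j ≠ i) : u j * v i - v j * u i ≠ 0 := by
  intro h
  apply hdist i j (fun he => hij he.symm)
  have h' : u j * v i = v j * u i := by linear_combination h
  by_cases hui : u i = 0
  · have hvi : v i ≠ 0 := by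
      intro hvi; exact hnz i (by simp [Prod.ext_iff, hui, hvi])
    refine ⟨v j / v i, ?_⟩
    have huj : u j = 0 := by
      have := h'
      rw [hui, mul_zero] at this
      exact (mul_eq_zero.mp this).resolve_right hvi
    simp [Prod.ext_iff, Prod.smul_def, hui, huj]
    field_simp
  · refine ⟨u j / u i, ?_⟩
    simp only [Prod.ext_iff, Prod.smul_def, smul_eq_mul]
    constructor
    · field_simp
    · field_simp
      linear_combination -h

/-- observer-based duality: with `q_I = ∏_{j ∈ Iᶜ} L_j`,
`p_I = Λ_{q_I}^{⊙ d}` and `g_I = ⊙_{i ∈ I} Lᵢ^k ∈ Sym^d(P_{1,k})`, the natural pairing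
`p_I(g_{I'})` — given (up to the `d!` normalization) by `∏_{i ∈ I'} (q_I, Lᵢ^k)` — is
nonzero if `I = I'` and zero if `I ≠ I'`. -/
theorem observer_maps_pairing (n d : ℕ) (hd : 1 ≤ d) (hdn : d ≤ n - 1)
    (u v : Fin n → ℂ) (hnz : ∀ i, ((u i, v i) : ℂ × ℂ) ≠ 0)
    (hdist : ∀ i j, i ≠ j → ¬ ∃ c : ℂ, ((u j, v j) : ℂ × ℂ) = c • (u i, v i))
    (I I' : Finset (Fin n))
    (hI : I ∈ Finset.powersetCard d (Finset.univ : Finset (Fin n)))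
    (hI' : I' ∈ Finset.powersetCard d (Finset.univ : Finset (Fin n))) :
    (I = I' →
      (∏ i ∈ I', bform (n - d)
        (∏ j ∈ Iᶜ, (Polynomial.C (u j) * Polynomial.X - Polynomial.C (v j)))
        ((Polynomial.C (u i) * Polynomial.X - Polynomial.C (v i)) ^ (n - d))) ≠ 0) ∧
    (I ≠ I' →
      (∏ i ∈ I', bform (n - d)
        (∏ j ∈ Iᶜ, (Polynomial.C (u j) * Polynomial.X - Polynomial.C (v j)))
        ((Polynomial.C (u i) * Polynomial.X - Polynomial.C (v i)) ^ (n - d))) = 0) := by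
  
  have hIc : I.card = d := (Finset.mem_powersetCard.mp hI).2
  have hIc' : I'.card = d := (Finset.mem_powersetCard.mp hI').2
  have hdn' : d ≤ n := le_trans hdn (Nat.sub_le n 1)
  have hcompl : Iᶜ.card = n - d := by
    rw [Finset.card_compl, hIc]; simp
  have hb : ∀ i : Fin n,
      bform (n - d) (∏ j ∈ Iᶜ, (C (u j) * X - C (v j))) ((C (u i) * X - C (v i)) ^ (n - d))
        = ∏ j ∈ Iᶜ, (u j * v i - v j * u i) := by
    intro i
    rw [bform_linpow, ← hcompl, homog]
  constructor
  · intro hEq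
    subst hEq
    rw [Finset.prod_ne_zero_iff]
    intro i hi
    rw [hb]
    rw [Finset.prod_ne_zero_iff]
    intro j hj
    exact cross_ne u v hnz hdist i j (by
      intro hji; subst hji; exact (Finset.mem_compl.mp hj) hi)
  · intro hne
    obtain ⟨i, hiI', hiI⟩ : ∃ i ∈ I', i ∉ I := by
      by_contra hc
      push_neg at hc
      exact hne (Finset.eq_of_subset_of_card_le hc (by rw [hIc, hIc'])).symm
    refine Finset.prod_eq_zero hiI' ?_
    rw [hb]
    exact Finset.prod_eq_zero (Finset.mem_compl.mpr hiI) (by ring)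
end

section
/- For q, q~ binary forms of degree k, the pairing (q, q~) factorizes on products of linear forms: if q = prod_{i=1}^{k} (a_i v - b_i u) and q~ = (a v - b u)^k, then (q, q~) = prod_{i=1}^{k} (a_i b - b_i a). -/
open Polynomial Finset

lemma coeff_lin_pow (a b : ℂ) (k j : ℕ) (h : j ≤ k) :
    ((C a * X - C b) ^ k).coeff j = (k.choose j : ℂ) * a ^ j * (-b) ^ (k - j) := by
  have e : (C a * X - C b) = (C a * X + C (-b)) := by rw [map_neg]; ring
  rw [e, add_pow, finset_sum_coeff]
  have hterm : ∀ m, (C a * X) ^ m * C (-b) ^ (k - m) * (k.choose m : Polynomial ℂ)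
      = C ((k.choose m : ℂ) * a ^ m * (-b) ^ (k - m)) * X ^ m := by
    intro m
    rw [mul_pow, ← C_pow, ← C_pow, ← C_eq_natCast, C_mul, C_mul]
    ring
  simp_rw [hterm, coeff_C_mul, coeff_X_pow]
  rw [Finset.sum_eq_single j]
  · simp
  · intro m hm hne; simp [hne.symm]
  · intro hj; simp at hj; omega

lemma sumA (k : ℕ) (q : Polynomial ℂ) (c a₀ b₀ : ℂ) :
    ∑ i ∈ Finset.range (k + 2), c * (q * X).coeff i * b₀ ^ i * a₀ ^ (k + 1 - i)
      = c * b₀ * ∑ i ∈ Finset.range (k + 1), q.coeff i * b₀ ^ i * a₀ ^ (k - i) := by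
  rw [Finset.sum_range_succ']
  simp only [coeff_mul_X, coeff_mul_X_zero, pow_zero, mul_zero, zero_mul, add_zero]
  rw [Finset.mul_sum]
  refine Finset.sum_congr rfl fun i hi => ?_
  simp only [Finset.mem_range] at hi
  have h : k + 1 - (i + 1) = k - i := by omega
  rw [h]; ring

lemma sumB (k : ℕ) (q : Polynomial ℂ) (c a₀ b₀ : ℂ) (hdeg : q.natDegree ≤ k) :
    ∑ i ∈ Finset.range (k + 2), c * q.coeff i * b₀ ^ i * a₀ ^ (k + 1 - i)
      = c * a₀ * ∑ i ∈ Finset.range (k + 1), q.coeff i * b₀ ^ i * a₀ ^ (k - i) := by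
  rw [Finset.sum_range_succ]
  have hc : q.coeff (k + 1) = 0 := coeff_eq_zero_of_natDegree_lt (by omega)
  rw [hc, Finset.mul_sum]
  simp only [mul_zero, zero_mul, add_zero]
  refine Finset.sum_congr rfl fun i hi => ?_
  simp only [Finset.mem_range] at hi
  have h : k + 1 - i = (k - i) + 1 := by omega
  rw [h, pow_succ]; ring

lemma key_sum (k : ℕ) (a b : Fin k → ℂ) (a₀ b₀ : ℂ) :
    ∑ i ∈ Finset.range (k + 1),
        (∏ j, (C (a j) * X - C (b j))).coeff i * b₀ ^ i * a₀ ^ (k - i)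
      = ∏ j, (a j * b₀ - b j * a₀) := by
  induction k with
  | zero => simp
  | succ k ih =>
    rw [Fin.prod_univ_castSucc, Fin.prod_univ_castSucc (f := fun j => a j * b₀ - b j * a₀)]
    set q : Polynomial ℂ := ∏ j : Fin k, (C (a j.castSucc) * X - C (b j.castSucc)) with hq
    have hdeg : q.natDegree ≤ k := by
      refine le_trans (Polynomial.natDegree_prod_le _ _) ?_
      refine le_trans (Finset.sum_le_card_nsmul _ _ 1 ?_) (by simp)
      intro j _
      have e : (C (a (Fin.castSucc j)) * X - C (b (Fin.castSucc j)))
          = C (a (Fin.castSucc j)) * X + C (-(b (Fin.castSucc j))) := by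
        rw [map_neg]; ring
      rw [e]
      exact natDegree_linear_le
    have hsplit : q * (C (a (Fin.last k)) * X - C (b (Fin.last k)))
        = C (a (Fin.last k)) * (q * X) - C (b (Fin.last k)) * q := by ring
    rw [hsplit]
    have e2 : ∀ i, (C (a (Fin.last k)) * (q * X) - C (b (Fin.last k)) * q).coeff i * b₀ ^ i
          * a₀ ^ (k + 1 - i)
        = a (Fin.last k) * (q * X).coeff i * b₀ ^ i * a₀ ^ (k + 1 - i)
          - b (Fin.last k) * q.coeff i * b₀ ^ i * a₀ ^ (k + 1 - i) := by
      intro i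
      rw [coeff_sub, coeff_C_mul, coeff_C_mul]; ring
    simp only [e2]
    rw [Finset.sum_sub_distrib, sumA, sumB k q _ _ _ hdeg,
      ih (fun j => a j.castSucc) (fun j => b j.castSucc)]
    ring

/-- factorization of the pairing on products of linear forms: if
`q = ∏_{i=1}^k (aᵢ v - bᵢ u)` and `q~ = (a v - b u)^k` (linear forms `a v - b u` being
encoded as polynomials `a X - b`), then `(q, q~) = ∏_{i=1}^k (aᵢ b - bᵢ a)`. -/
theorem bform_factorization (k : ℕ) (a b : Fin k → ℂ) (a₀ b₀ : ℂ) :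
    bform k (∏ i, (Polynomial.C (a i) * Polynomial.X - Polynomial.C (b i)))
        ((Polynomial.C a₀ * Polynomial.X - Polynomial.C b₀) ^ k)
      = ∏ i, (a i * b₀ - b i * a₀) := by
  rw [← key_sum k a b a₀ b₀]
  unfold bform
  refine Finset.sum_congr rfl fun i hi => ?_
  simp only [Finset.mem_range] at hi
  have hik : i ≤ k := by omega
  rw [coeff_lin_pow a₀ b₀ k (k - i) (by omega)]
  have h1 : k - (k - i) = i := by omega
  have h2 : k.choose (k - i) = k.choose i := Nat.choose_symm hik
  rw [h1, h2]
  have hch : (k.choose i : ℂ) ≠ 0 :=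
    Nat.cast_ne_zero.mpr (Nat.choose_pos hik).ne'
  have h3 : (-1 : ℂ) ^ i * (-b₀) ^ i = b₀ ^ i := by
    rw [← mul_pow]; simp
  field_simp
  ring_nf
  rw [show i * 2 = 2 * i by ring, pow_mul]
  norm_num
  ring
end
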